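/- Let μ > 0, B ≥ 1 an integer, 0 < τ_B ≤ τ_{B−1} ≤ … ≤ τ_1 < ∞, and j ∈ {0,…,B−1}. Then the piecewise function F_j given by F_j(x) = 0 for x < τ_B, F_j(x) = G_{m−j}(x) for τ_m ≤ x < τ_{m−1} (m = 2,…,B), and F_j(x) = G_{1−j}(x) for x ≥ τ_1 is nondecreasing on ℝ and takes values in [0,1], i.e., it is a valid cumulative distribution function. -/

import Mathlib

open Finset



/-- The Erlang CDF `G_m` with rate `μ` and (integer) stage parameter `m`:
`G_m(t) = 1 - e^(-μt) ∑_{k=0}^{m-1} (μt)^k / k!` for `t ≥ 0` and `m ≥ 1`,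
with the conventions `G_m(t) = 0` for `t < 0` and `G_m(t) = 1` for `t ≥ 0` when `m ≤ 0`. -/
noncomputable def erlangCDF (μ : ℝ) (m : ℤ) (t : ℝ) : ℝ :=
  if t < 0 then 0
  else if m ≤ 0 then 1
  else 1 - Real.exp (-(μ * t)) *
    ∑ k ∈ Finset.range m.toNat, (μ * t) ^ k / (Nat.factorial k : ℝ)

/-- The inter-update CDF `F_j` of a monotone threshold policy with battery size `B`,
thresholds `τ B ≤ τ (B-1) ≤ … ≤ τ 1` and post-update energy level `j`:
`F_j(x) = 0` for `x < τ B`, `F_j(x) = G_{m-j}(x)` for `τ m ≤ x < τ (m-1)` (`m = 2,…,B`)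
and `F_j(x) = G_{1-j}(x)` for `x ≥ τ 1`.  (For `x ≥ τ B`, the region index `m`, i.e. the
smallest `m ∈ {1,…,B}` with `τ m ≤ x`, is expressed as an `sInf`.) -/
noncomputable def interUpdateCDF (μ : ℝ) (B : ℕ) (τ : ℕ → ℝ) (j : ℕ) (x : ℝ) : ℝ :=
  if x < τ B then 0
  else erlangCDF μ
    ((sInf {m : ℕ | 1 ≤ m ∧ m ≤ B ∧ τ m ≤ x} : ℕ) - (j : ℤ)) x


lemma erlang_sum_nonneg (x : ℝ) (hx : 0 ≤ x) (n : ℕ) :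
    0 ≤ ∑ k ∈ range n, x ^ k / (Nat.factorial k : ℝ) :=
  Finset.sum_nonneg fun k _ => div_nonneg (pow_nonneg hx k) (Nat.cast_nonneg _)

lemma erlangCDF_mem_Icc (μ : ℝ) (hμ : 0 ≤ μ) (m : ℤ) (t : ℝ) :
    erlangCDF μ m t ∈ Set.Icc (0 : ℝ) 1 := by
  unfold erlangCDF
  split_ifs with h1 h2
  · exact ⟨le_refl 0, zero_le_one⟩
  · exact ⟨zero_le_one, le_refl 1⟩
  · push_neg at h1
    have hμt : 0 ≤ μ * t := mul_nonneg hμ h1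
    set S := ∑ k ∈ Finset.range m.toNat, (μ * t) ^ k / (Nat.factorial k : ℝ) with hS
    have hS0 : 0 ≤ S := erlang_sum_nonneg _ hμt _
    have hSe : S ≤ Real.exp (μ * t) := Real.sum_le_exp_of_nonneg hμt _
    have hle : Real.exp (-(μ * t)) * S ≤ 1 := by
      calc Real.exp (-(μ * t)) * S ≤ Real.exp (-(μ * t)) * Real.exp (μ * t) :=
            mul_le_mul_of_nonneg_left hSe (Real.exp_nonneg _)
        _ = 1 := by rw [← Real.exp_add]; simp
    have h0 : 0 ≤ Real.exp (-(μ * t)) * S := mul_nonneg (Real.exp_nonneg _) hS0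
    constructor <;> linarith

lemma erlangCDF_anti (μ : ℝ) (hμ : 0 ≤ μ) {m₁ m₂ : ℤ} (h : m₁ ≤ m₂) (t : ℝ) :
    erlangCDF μ m₂ t ≤ erlangCDF μ m₁ t := by
  by_cases ht : t < 0
  · unfold erlangCDF; rw [if_pos ht, if_pos ht]
  by_cases hm1 : m₁ ≤ 0
  · have : erlangCDF μ m₁ t = 1 := by unfold erlangCDF; rw [if_neg ht, if_pos hm1]
    rw [this]; exact (erlangCDF_mem_Icc μ hμ m₂ t).2
  · have hm2 : ¬ m₂ ≤ 0 := by omega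
    unfold erlangCDF
    rw [if_neg ht, if_neg hm1, if_neg ht, if_neg hm2]
    push_neg at ht
    have hμt : 0 ≤ μ * t := mul_nonneg hμ ht
    have hsub : ∑ k ∈ Finset.range m₁.toNat, (μ * t) ^ k / (Nat.factorial k : ℝ)
        ≤ ∑ k ∈ Finset.range m₂.toNat, (μ * t) ^ k / (Nat.factorial k : ℝ) := by
      apply Finset.sum_le_sum_of_subset_of_nonneg
      · exact Finset.range_mono (show m₁.toNat ≤ m₂.toNat by omega)
      · intro k _ _; exact div_nonneg (pow_nonneg hμt k) (Nat.cast_nonneg _)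
    have := mul_le_mul_of_nonneg_left hsub (Real.exp_nonneg (-(μ * t)))
    linarith

lemma erlang_hasDerivAt (μ : ℝ) (n : ℕ) (hn : 1 ≤ n) (t : ℝ) :
    HasDerivAt (fun t => Real.exp (-(μ * t)) *
        ∑ k ∈ range n, (μ * t) ^ k / (Nat.factorial k : ℝ))
      (-(μ * Real.exp (-(μ * t)) * (μ * t) ^ (n - 1) / (Nat.factorial (n - 1) : ℝ))) t := by
  have hlin : HasDerivAt (fun t : ℝ => μ * t) μ t := by
    simpa using (hasDerivAt_id t).const_mul μ
  have hexp : HasDerivAt (fun t => Real.exp (-(μ * t))) (Real.exp (-(μ * t)) * (-μ)) t :=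
    (hlin.neg).exp
  have hterm : ∀ k ∈ range n, HasDerivAt (fun t => (μ * t) ^ k / (Nat.factorial k : ℝ))
      ((k : ℝ) * (μ * t) ^ (k - 1) * μ / (Nat.factorial k : ℝ)) t := fun k _ =>
    (hlin.pow k).div_const _
  have hsum := HasDerivAt.sum hterm
  have hmul := hexp.mul hsum
  convert hmul using 1
  · rfl
  · rfl
  · ext s; simp only [Pi.mul_apply, Finset.sum_apply]
  obtain ⟨p, rfl⟩ : ∃ p, n = p + 1 := ⟨n - 1, by omega⟩
  have hsum_eq : ∑ k ∈ range (p + 1), (k : ℝ) * (μ * t) ^ (k - 1) * μ / (Nat.factorial k : ℝ)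
      = μ * ∑ i ∈ range p, (μ * t) ^ i / (Nat.factorial i : ℝ) := by
    rw [Finset.sum_range_succ']
    simp only [Nat.cast_zero, zero_mul, zero_div, add_zero]
    rw [Finset.mul_sum]
    apply Finset.sum_congr rfl
    intro i _
    have h1 : (Nat.factorial (i + 1) : ℝ) = (i + 1) * Nat.factorial i := by
      rw [Nat.factorial_succ]; push_cast; ring
    have h2 : (Nat.factorial i : ℝ) ≠ 0 := Nat.cast_ne_zero.mpr (Nat.factorial_ne_zero i)
    have h3 : ((i : ℝ) + 1) ≠ 0 := by positivity
    simp only [Nat.add_sub_cancel]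
    rw [h1]
    push_cast
    field_simp
  rw [hsum_eq, Finset.sum_range_succ]
  simp only [Nat.add_sub_cancel, Finset.sum_apply, Pi.add_apply]
  ring

lemma erlang_antitoneOn (μ : ℝ) (hμ : 0 ≤ μ) (n : ℕ) (hn : 1 ≤ n) :
    AntitoneOn (fun t => Real.exp (-(μ * t)) *
        ∑ k ∈ range n, (μ * t) ^ k / (Nat.factorial k : ℝ)) (Set.Ici (0 : ℝ)) := by
  apply antitoneOn_of_deriv_nonpos (convex_Ici 0)
  · exact fun t _ => ((erlang_hasDerivAt μ n hn t).differentiableAt).continuousAt.continuousWithinAt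
  · exact fun t _ => ((erlang_hasDerivAt μ n hn t).differentiableAt).differentiableWithinAt
  · intro t ht
    rw [interior_Ici] at ht
    rw [(erlang_hasDerivAt μ n hn t).deriv]
    have ht' : (0 : ℝ) ≤ t := le_of_lt ht
    have : 0 ≤ μ * Real.exp (-(μ * t)) * (μ * t) ^ (n - 1) / (Nat.factorial (n - 1) : ℝ) := by
      apply div_nonneg _ (Nat.cast_nonneg _)
      exact mul_nonneg (mul_nonneg hμ (Real.exp_nonneg _)) (pow_nonneg (mul_nonneg hμ ht') _)
    linarith

lemma erlangCDF_mono (μ : ℝ) (hμ : 0 ≤ μ) (m : ℤ) : Monotone (erlangCDF μ m) := by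
  intro t₁ t₂ h
  by_cases h1 : t₁ < 0
  · have : erlangCDF μ m t₁ = 0 := by unfold erlangCDF; rw [if_pos h1]
    rw [this]; exact (erlangCDF_mem_Icc μ hμ m t₂).1
  · push_neg at h1
    have h2 : ¬ t₂ < 0 := not_lt.mpr (h1.trans h)
    by_cases hm : m ≤ 0
    · unfold erlangCDF; rw [if_neg (not_lt.mpr h1), if_pos hm, if_neg h2, if_pos hm]
    · unfold erlangCDF
      rw [if_neg (not_lt.mpr h1), if_neg hm, if_neg h2, if_neg hm]
      have hn : 1 ≤ m.toNat := by omega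
      have := erlang_antitoneOn μ hμ m.toNat hn h1 (h1.trans h) h
      simp only at this
      linarith

/-- For `μ > 0`, integer `B ≥ 1`, thresholds `0 < τ B ≤ … ≤ τ 1 < ∞` and
`j ∈ {0,…,B-1}`, the piecewise function `F_j` is nondecreasing on `ℝ` with values in `[0,1]`,
i.e. it is a valid cumulative distribution function. -/
theorem interUpdateCDF_isCDF (μ : ℝ) (hμ : 0 < μ) (B : ℕ) (hB : 1 ≤ B)
    (τ : ℕ → ℝ) (hpos : 0 < τ B)
    (hmono : ∀ m, 1 ≤ m → m < B → τ (m + 1) ≤ τ m)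
    (j : ℕ) (hj : j < B) :
    Monotone (interUpdateCDF μ B τ j) ∧
      ∀ x, interUpdateCDF μ B τ j x ∈ Set.Icc (0 : ℝ) 1 := by
  have hμ' : 0 ≤ μ := hμ.le
  constructor
  · intro x₁ x₂ h
    unfold interUpdateCDF
    split_ifs with h1 h2 h2
    · exact le_refl 0
    · exact (erlangCDF_mem_Icc μ hμ' _ x₂).1
    · exact absurd (lt_of_le_of_lt (le_trans (not_lt.mp h1) h) h2) (lt_irrefl _)
    · -- main case
      push_neg at h1 h2
      have hne1 : {m : ℕ | 1 ≤ m ∧ m ≤ B ∧ τ m ≤ x₁}.Nonempty := ⟨B, hB, le_refl B, h1⟩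
      have hmem := Nat.sInf_mem hne1
      have hsub : sInf {m : ℕ | 1 ≤ m ∧ m ≤ B ∧ τ m ≤ x₂}
          ≤ sInf {m : ℕ | 1 ≤ m ∧ m ≤ B ∧ τ m ≤ x₁} := by
        apply Nat.sInf_le
        exact ⟨hmem.1, hmem.2.1, hmem.2.2.trans h⟩
      calc erlangCDF μ ((sInf {m : ℕ | 1 ≤ m ∧ m ≤ B ∧ τ m ≤ x₁} : ℕ) - (j : ℤ)) x₁
          ≤ erlangCDF μ ((sInf {m : ℕ | 1 ≤ m ∧ m ≤ B ∧ τ m ≤ x₂} : ℕ) - (j : ℤ)) x₁ :=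
            erlangCDF_anti μ hμ' (sub_le_sub_right (Int.ofNat_le.mpr hsub) _) x₁
        _ ≤ erlangCDF μ ((sInf {m : ℕ | 1 ≤ m ∧ m ≤ B ∧ τ m ≤ x₂} : ℕ) - (j : ℤ)) x₂ :=
            erlangCDF_mono μ hμ' _ h
  · intro x
    unfold interUpdateCDF
    split_ifs with h1
    · exact ⟨le_refl 0, zero_le_one⟩
    · exact erlangCDF_mem_Icc μ hμ' _ x
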